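/- Persistence measure of an interval module: let J ⊆ ℝ be an interval and V = I^J. For all extended reals −∞ ≤ a < b ≤ c < d ≤ +∞ with b and c finite, μ_V([a,b]×[c,d]) = 1 if [b,c] ⊆ J ⊆ (a,d), and μ_V([a,b]×[c,d]) = 0 otherwise (here (a,d) denotes (−∞,d) when a = −∞ and (a,+∞) when d = +∞). -/

import Mathlib

attribute [local instance] Classical.propDecidable

structure PersMod (k : Type) [Field k] (T : Type) [Preorder T] where
  space : T → Type
  [addCommGroup : ∀ t, AddCommGroup (space t)]
  [module : ∀ t, Module k (space t)]
  map : ∀ s t : T, s ≤ t → space s →ₗ[k] space t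
  map_id : ∀ t, map t t le_rfl = LinearMap.id
  map_comp : ∀ r s t (h1 : r ≤ s) (h2 : s ≤ t),
    (map s t h2).comp (map r s h1) = map r t (h1.trans h2)

attribute [instance] PersMod.addCommGroup PersMod.module

def PersIso {k : Type} [Field k] {T : Type} [Preorder T] (U V : PersMod k T) : Prop :=
  ∃ e : ∀ t, U.space t ≃ₗ[k] V.space t,
    ∀ s t (h : s ≤ t),
      (e t).toLinearMap.comp (U.map s t h) = (V.map s t h).comp (e s).toLinearMap

def IsIntervalSet {T : Type} [Preorder T] (J : Set T) : Prop :=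
  J.Nonempty ∧ ∀ ⦃r s t : T⦄, r ∈ J → t ∈ J → r ≤ s → s ≤ t → s ∈ J

noncomputable def intervalModule (k : Type) [Field k] (T : Type) [Preorder T]
    (J : Set T) (hJ : IsIntervalSet J) : PersMod k T where
  space t := PLift (t ∈ J) → k
  addCommGroup := fun _ => inferInstance
  module := fun _ => inferInstance
  map s t _ :=
    { toFun := fun f _ => if hs : s ∈ J then f ⟨hs⟩ else 0
      map_add' := fun f g => by
        funext ht; by_cases hs : s ∈ J <;> simp [hs]
      map_smul' := fun c f => by
        funext ht; by_cases hs : s ∈ J <;> simp [hs] }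
  map_id t := by
    refine LinearMap.ext fun f => funext fun ht => ?_
    show (if hs : t ∈ J then f ⟨hs⟩ else 0) = f ht
    rw [dif_pos ht.down]
  map_comp r s t h1 h2 := by
    refine LinearMap.ext fun f => funext fun ht => ?_
    show (if hs : s ∈ J then (if hr : r ∈ J then f ⟨hr⟩ else 0) else 0)
        = (if hr : r ∈ J then f ⟨hr⟩ else 0)
    by_cases hr : r ∈ J
    · have hs : s ∈ J := hJ.2 hr ht.down h1 h2
      simp [hr, hs]
    · by_cases hs : s ∈ J <;> simp [hr, hs]

noncomputable def dsum {k : Type} [Field k] {T : Type} [Preorder T] {L : Type}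
    (V : L → PersMod k T) : PersMod k T where
  space t := DFinsupp (fun ℓ => (V ℓ).space t)
  addCommGroup := fun _ => inferInstance
  module := fun _ => inferInstance
  map s t h := DFinsupp.mapRange.linearMap (fun ℓ => (V ℓ).map s t h)
  map_id t := by
    show DFinsupp.mapRange.linearMap (fun ℓ => (V ℓ).map t t le_rfl) = LinearMap.id
    have : (fun ℓ => (V ℓ).map t t le_rfl)
        = fun ℓ => (LinearMap.id : (V ℓ).space t →ₗ[k] (V ℓ).space t) :=
      funext fun ℓ => (V ℓ).map_id t
    rw [this]
    exact DFinsupp.mapRange.linearMap_id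
  map_comp r s t h1 h2 := by
    show (DFinsupp.mapRange.linearMap (fun ℓ => (V ℓ).map s t h2)).comp
        (DFinsupp.mapRange.linearMap (fun ℓ => (V ℓ).map r s h1))
      = DFinsupp.mapRange.linearMap (fun ℓ => (V ℓ).map r t (h1.trans h2))
    rw [← DFinsupp.mapRange.linearMap_comp]
    congr 1
    funext ℓ
    exact (V ℓ).map_comp r s t h1 h2

open scoped ENNReal

section Dim

noncomputable def edim (k : Type) [Field k] (M : Type) [AddCommGroup M] [Module k M] : ℕ∞ :=
  Cardinal.toENat (Module.rank k M)

noncomputable def erank {k : Type} [Field k] {M N : Type} [AddCommGroup M] [Module k M]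
    [AddCommGroup N] [Module k N] (f : M →ₗ[k] N) : ℕ∞ :=
  edim k (LinearMap.range f)

noncomputable def ecard (S : Type) : ℕ∞ := Cardinal.toENat (Cardinal.mk S)

end Dim

section Matchings

noncomputable def eDiff (x y : EReal) : ℝ≥0∞ :=
  if x = y then 0
  else if x = ⊤ ∨ x = ⊥ ∨ y = ⊤ ∨ y = ⊥ then ⊤
  else ENNReal.ofReal |x.toReal - y.toReal|

noncomputable def dPt (α β : EReal × EReal) : ℝ≥0∞ :=
  max (eDiff α.1 β.1) (eDiff α.2 β.2)

noncomputable def diagDist (α : EReal × EReal) : ℝ≥0∞ :=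
  if α.1 = ⊥ ∨ α.2 = ⊤ then ⊤ else ENNReal.ofReal ((α.2.toReal - α.1.toReal) / 2)

def IsMatching {α β : Type} (M : Set (α × β)) : Prop :=
  (∀ a b b', (a, b) ∈ M → (a, b') ∈ M → b = b') ∧
  (∀ a a' b, (a, b) ∈ M → (a', b) ∈ M → a = a')

def IsDeltaMatching {α β : Type} (A : α → EReal × EReal) (B : β → EReal × EReal)
    (δ : ℝ≥0∞) : Prop :=
  ∃ M : Set (α × β), IsMatching M ∧
    (∀ p ∈ M, dPt (A p.1) (B p.2) ≤ δ) ∧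
    (∀ a, (∀ b, (a, b) ∉ M) → diagDist (A a) ≤ δ) ∧
    (∀ b, (∀ a, (a, b) ∉ M) → diagDist (B b) ≤ δ)

noncomputable def dBottle {α β : Type} (A : α → EReal × EReal) (B : β → EReal × EReal) : ℝ≥0∞ :=
  sInf {d : ℝ≥0∞ | ∃ δ : ℝ, 0 ≤ δ ∧ IsDeltaMatching A B (ENNReal.ofReal δ) ∧ d = ENNReal.ofReal δ}

end Matchings

section Measure

noncomputable def persIm {k : Type} [Field k] (V : PersMod k ℝ) (a : EReal) (c : ℝ) :
    Submodule k (V.space c) :=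
  if h : ∃ a' : ℝ, a = (a' : EReal) ∧ a' ≤ c then
    LinearMap.range (V.map h.choose c h.choose_spec.2)
  else ⊥

noncomputable def persKer {k : Type} [Field k] (V : PersMod k ℝ) (c : ℝ) (d : EReal) :
    Submodule k (V.space c) :=
  if h : ∃ d' : ℝ, d = (d' : EReal) ∧ c ≤ d' then
    LinearMap.ker (V.map c h.choose h.choose_spec.2)
  else ⊤

noncomputable def persMeasure {k : Type} [Field k] (V : PersMod k ℝ)
    (a : EReal) (b c : ℝ) (d : EReal) : ℕ∞ :=
  edim k
    (↥(persIm V (b : EReal) c ⊓ persKer V c d) ⧸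
      Submodule.comap (persIm V (b : EReal) c ⊓ persKer V c d).subtype
        (persIm V a c ⊓ persKer V c d))

end Measure

section Interleaving

def Interleaved (k : Type) [Field k] (U V : PersMod k ℝ) (δ : ℝ) : Prop :=
  ∃ (φ : ∀ t : ℝ, U.space t →ₗ[k] V.space (t + δ))
    (ψ : ∀ t : ℝ, V.space t →ₗ[k] U.space (t + δ)),
    (∀ s t (h : s ≤ t),
      (φ t).comp (U.map s t h) = (V.map (s + δ) (t + δ) (by linarith)).comp (φ s)) ∧
    (∀ s t (h : s ≤ t),
      (ψ t).comp (V.map s t h) = (U.map (s + δ) (t + δ) (by linarith)).comp (ψ s)) ∧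
    (∀ t (h : t ≤ t + δ + δ), (ψ (t + δ)).comp (φ t) = U.map t (t + δ + δ) h) ∧
    (∀ t (h : t ≤ t + δ + δ), (φ (t + δ)).comp (ψ t) = V.map t (t + δ + δ) h)

noncomputable def dInter (k : Type) [Field k] (U V : PersMod k ℝ) : ℝ≥0∞ :=
  sInf {d : ℝ≥0∞ | ∃ δ : ℝ, 0 ≤ δ ∧ Interleaved k U V δ ∧ d = ENNReal.ofReal δ}

def QTame (k : Type) [Field k] (V : PersMod k ℝ) : Prop :=
  ∀ s t : ℝ, ∀ h : s < t, erank (V.map s t h.le) ≠ ⊤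

def LocFinitePM (k : Type) [Field k] (W : PersMod k ℝ) : Prop :=
  ∃ (L : Type) (J : L → Set ℝ) (hJ : ∀ ℓ, IsIntervalSet (J ℓ)),
    PersIso W (dsum fun ℓ => intervalModule k ℝ (J ℓ) (hJ ℓ)) ∧
    ∀ S : Set ℝ, Bornology.IsBounded S → {ℓ : L | (J ℓ ∩ S).Nonempty}.Finite

noncomputable def zeroPers (k : Type) [Field k] : PersMod k ℝ where
  space _ := PUnit
  addCommGroup := fun _ => inferInstance
  module := fun _ => inferInstance
  map _ _ _ := 0
  map_id t := LinearMap.ext fun x => Subsingleton.elim _ _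
  map_comp r s t h1 h2 := LinearMap.ext fun x => Subsingleton.elim _ _

noncomputable def smoothing {k : Type} [Field k] (V : PersMod k ℝ) (ε : ℝ) (hε : 0 < ε) :
    PersMod k ℝ where
  space t := LinearMap.range (V.map (t - ε) (t + ε) (by linarith))
  addCommGroup := fun _ => inferInstance
  module := fun _ => inferInstance
  map s t h := LinearMap.restrict (V.map (s + ε) (t + ε) (by linarith))
    (p := LinearMap.range (V.map (s - ε) (s + ε) (by linarith)))
    (q := LinearMap.range (V.map (t - ε) (t + ε) (by linarith)))
    (by
      rintro x ⟨y, rfl⟩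
      refine ⟨V.map (s - ε) (t - ε) (by linarith) y, ?_⟩
      have h1 := LinearMap.congr_fun
        (V.map_comp (s - ε) (t - ε) (t + ε) (by linarith) (by linarith)) y
      have h2 := LinearMap.congr_fun
        (V.map_comp (s - ε) (s + ε) (t + ε) (by linarith) (by linarith)) y
      simp only [LinearMap.comp_apply] at h1 h2
      rw [h1, h2])
  map_id t := by
    refine LinearMap.ext fun x => Subtype.ext ?_
    have := LinearMap.congr_fun (V.map_id (t + ε)) x.1
    simpa [LinearMap.restrict_apply] using this
  map_comp r s t h1 h2 := by
    refine LinearMap.ext fun x => Subtype.ext ?_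
    have := LinearMap.congr_fun
      (V.map_comp (r + ε) (s + ε) (t + ε) (by linarith) (by linarith)) x.1
    simpa [LinearMap.restrict_apply] using this

end Interleaving

section Webb

def webbSubmodule (k : Type) [Field k] (t : ℤ) : Submodule k (ℕ → k) where
  carrier := {x | ∀ i : ℕ, (i : ℤ) < -t → x i = 0}
  add_mem' := by
    intro x y hx hy i hi
    simp [Pi.add_apply, hx i hi, hy i hi]
  zero_mem' := by
    intro i hi
    rfl
  smul_mem' := by
    intro c x hx i hi
    simp [Pi.smul_apply, hx i hi]

noncomputable def webbModule (k : Type) [Field k] : PersMod k ↥{n : ℤ | n ≤ 0} where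
  space t := ↥(webbSubmodule k t.1)
  addCommGroup := fun _ => inferInstance
  module := fun _ => inferInstance
  map s t h := Submodule.inclusion (by
    intro x hx
    have hx' : ∀ i : ℕ, (i : ℤ) < -s.1 → x i = 0 := hx
    intro i hi
    exact hx' i (lt_of_lt_of_le hi (neg_le_neg h)))
  map_id t := LinearMap.ext fun x => rfl
  map_comp r s t h1 h2 := LinearMap.ext fun x => rfl

end Webb

section Decorated

/-- `decMem t x` : the real number `t` belongs to the interval described by the
decorated pair `x = ((p, εp), (q, εq))`, where the decoration `false` means `⁻`
and `true` means `⁺`. -/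
def decMem (t : ℝ) (x : (EReal × Bool) × (EReal × Bool)) : Prop :=
  (x.1.1 < (t : EReal) ∨ (x.1.1 = (t : EReal) ∧ x.1.2 = false)) ∧
  ((t : EReal) < x.2.1 ∨ ((t : EReal) = x.2.1 ∧ x.2.2 = true))

/-- A valid decorated pair: the left coordinate is `p⁻`/`p⁺` for a real `p` or `−∞⁺`,
the right coordinate is `q⁻`/`q⁺` for a real `q` or `+∞⁻`, and the corresponding
interval is nonempty (i.e. `p* < q*`). -/
def ValidDec (x : (EReal × Bool) × (EReal × Bool)) : Prop :=
  (x.1.1 = ⊥ → x.1.2 = true) ∧ x.1.1 ≠ ⊤ ∧ (x.2.1 = ⊤ → x.2.2 = false) ∧ x.2.1 ≠ ⊥ ∧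
  {t : ℝ | decMem t x}.Nonempty

/-- The decorated pair `x` belongs to the rectangle `[a,b] × [c,d]`, i.e.
`[b,c] ⊆ ⟨p*,q*⟩ ⊆ (a,d)`. -/
def decInRect (x : (EReal × Bool) × (EReal × Bool)) (a : EReal) (b c : ℝ) (d : EReal) : Prop :=
  (∀ t ∈ Set.Icc b c, decMem t x) ∧
  (∀ t : ℝ, decMem t x → a < (t : EReal) ∧ (t : EReal) < d)

/-- `Dgm` is (a labelling of) the decorated persistence diagram of `V`. -/
def IsDgmOf {k : Type} [Field k] (V : PersMod k ℝ) {ι : Type}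
    (Dgm : ι → (EReal × Bool) × (EReal × Bool)) : Prop :=
  (∀ i, ValidDec (Dgm i)) ∧
  ∀ (a : EReal) (b c : ℝ) (d : EReal), a < (b : EReal) → b ≤ c → (c : EReal) < d →
    persMeasure V a b c d = ecard {i : ι // decInRect (Dgm i) a b c d}

end Decorated

section RMeasure

/-- `[a,b] × [c,d]` is a (nondegenerate) rectangle contained in `D`. -/
def RectIn (D : Set (ℝ × ℝ)) (a b c d : ℝ) : Prop :=
  a < b ∧ c < d ∧ Set.Icc a b ×ˢ Set.Icc c d ⊆ D

/-- An r-measure on `D`: additivity under horizontal and vertical splitting. -/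
def IsRMeasure (D : Set (ℝ × ℝ)) (μ : ℝ → ℝ → ℝ → ℝ → ℕ∞) : Prop :=
  (∀ a p b c d, a < p → p < b → RectIn D a b c d → μ a b c d = μ a p c d + μ p b c d) ∧
  (∀ a b c q d, c < q → q < d → RectIn D a b c d → μ a b c d = μ a b c q + μ a b q d)

/-- Membership of a decorated point of the plane (`Bool` decoration: `true` = `⁺`,
`false` = `⁻`) in the closed rectangle `[a,b] × [c,d]`. -/
def dptMem (x : (ℝ × Bool) × (ℝ × Bool)) (a b c d : ℝ) : Prop :=
  a ≤ x.1.1 ∧ x.1.1 ≤ b ∧ c ≤ x.2.1 ∧ x.2.1 ≤ d ∧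
  (x.1.1 = a → x.1.2 = true) ∧ (x.1.1 = b → x.1.2 = false) ∧
  (x.2.1 = c → x.2.2 = true) ∧ (x.2.1 = d → x.2.2 = false)

/-- The r-interior `D•` of `D`: decorated points contained in some rectangle of `D`. -/
def rInt (D : Set (ℝ × ℝ)) : Set ((ℝ × Bool) × (ℝ × Bool)) :=
  {x | ∃ a b c d, RectIn D a b c d ∧ dptMem x a b c d}

/-- The number of decorated points, counted with multiplicity `m`, lying in the
rectangle `[a,b] × [c,d]`. -/
noncomputable def dcount (m : (ℝ × Bool) × (ℝ × Bool) → ℕ) (a b c d : ℝ) : ℕ∞ :=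
  ecard (Σ x : {x : (ℝ × Bool) × (ℝ × Bool) // dptMem x a b c d}, Fin (m x.1))

end RMeasure

section AuxIM
variable {k : Type} [Field k] {J : Set ℝ} (hJ : IsIntervalSet J)

lemma im_map_apply (s t : ℝ) (h : s ≤ t) (f : (intervalModule k ℝ J hJ).space s)
    (ht : PLift (t ∈ J)) :
    (intervalModule k ℝ J hJ).map s t h f ht = if hs : s ∈ J then f ⟨hs⟩ else 0 := rfl

lemma im_range_top (s t : ℝ) (h : s ≤ t) (hs : s ∈ J) :
    LinearMap.range ((intervalModule k ℝ J hJ).map s t h) = ⊤ := by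
  rw [LinearMap.range_eq_top]
  intro g
  refine ⟨fun _ => if ht : t ∈ J then g ⟨ht⟩ else 0, ?_⟩
  funext ht'
  erw [im_map_apply, dif_pos hs, dif_pos ht'.down]

lemma im_range_bot (s t : ℝ) (h : s ≤ t) (hs : s ∉ J) :
    LinearMap.range ((intervalModule k ℝ J hJ).map s t h) = ⊥ := by
  rw [LinearMap.range_eq_bot]
  refine LinearMap.ext fun f => funext fun ht => ?_
  rw [im_map_apply, dif_neg hs]; rfl

lemma im_ker_bot (s t : ℝ) (h : s ≤ t) (hs : s ∈ J) (ht : t ∈ J) :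
    LinearMap.ker ((intervalModule k ℝ J hJ).map s t h) = ⊥ := by
  rw [LinearMap.ker_eq_bot']
  intro f hf
  have := congrFun hf ⟨ht⟩
  rw [im_map_apply, dif_pos hs] at this
  funext x
  exact this

lemma im_ker_top (s t : ℝ) (h : s ≤ t) (ht : t ∉ J) :
    LinearMap.ker ((intervalModule k ℝ J hJ).map s t h) = ⊤ := by
  rw [LinearMap.ker_eq_top]
  refine LinearMap.ext fun f => funext fun x => absurd x.down ht

end AuxIM

section AuxPers
variable {k : Type} [Field k] (V : PersMod k ℝ)

lemma persIm_coe (a' c : ℝ) (h : a' ≤ c) :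
    persIm V (a' : EReal) c = LinearMap.range (V.map a' c h) := by
  have hp : ∃ x : ℝ, (a' : EReal) = (x : EReal) ∧ x ≤ c := ⟨a', rfl, h⟩
  rw [persIm, dif_pos hp]
  have e : hp.choose = a' := by
    have := hp.choose_spec.1
    exact_mod_cast this.symm
  have key : ∀ (s : ℝ) (hs : s ≤ c), s = a' →
      LinearMap.range (V.map s c hs) = LinearMap.range (V.map a' c h) := by
    rintro s hs rfl; rfl
  exact key _ _ e

lemma persIm_bot' (x : EReal) (hx : ∀ a' : ℝ, x ≠ (a' : EReal)) (c : ℝ) :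
    persIm V x c = ⊥ := by
  rw [persIm, dif_neg]
  rintro ⟨a', ha, -⟩
  exact hx a' ha

lemma persKer_coe (c d' : ℝ) (h : c ≤ d') :
    persKer V c (d' : EReal) = LinearMap.ker (V.map c d' h) := by
  have hp : ∃ x : ℝ, (d' : EReal) = (x : EReal) ∧ c ≤ x := ⟨d', rfl, h⟩
  rw [persKer, dif_pos hp]
  have e : hp.choose = d' := by
    have := hp.choose_spec.1
    exact_mod_cast this.symm
  have key : ∀ (t : ℝ) (ht : c ≤ t), t = d' →
      LinearMap.ker (V.map c t ht) = LinearMap.ker (V.map c d' h) := by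
    rintro t ht rfl; rfl
  exact key _ _ e

lemma persKer_top' (x : EReal) (hx : ∀ d' : ℝ, x ≠ (d' : EReal)) (c : ℝ) :
    persKer V c x = ⊤ := by
  rw [persKer, dif_neg]
  rintro ⟨d', hd, -⟩
  exact hx d' hd

end AuxPers

section AuxDim
variable {k M : Type} [Field k] [AddCommGroup M] [Module k M]

lemma edim_quot_of_le {N P : Submodule k M} (h : N ≤ P) :
    edim k (↥N ⧸ Submodule.comap N.subtype P) = 0 := by
  have ht : Submodule.comap N.subtype P = ⊤ := by
    rw [eq_top_iff]; intro x _; exact h x.2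
  haveI : Subsingleton (↥N ⧸ Submodule.comap N.subtype P) :=
    Submodule.Quotient.subsingleton_iff.mpr ht
  rw [edim, rank_subsingleton']
  simp

lemma edim_quot_of_top_bot {N P : Submodule k M} (hN : N = ⊤) (hP : P = ⊥) :
    edim k (↥N ⧸ Submodule.comap N.subtype P) = edim k M := by
  subst hN; subst hP
  have e1 : (↥(⊤ : Submodule k M) ⧸
      Submodule.comap (⊤ : Submodule k M).subtype (⊥ : Submodule k M)) ≃ₗ[k]
      ↥(⊤ : Submodule k M) :=
    Submodule.quotEquivOfEqBot _ (by rw [Submodule.comap_bot, Submodule.ker_subtype])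
  rw [edim, edim, e1.rank_eq, rank_top]

end AuxDim

theorem stmt6 (k : Type) [Field k] (J : Set ℝ) (hJ : IsIntervalSet J)
    (a : EReal) (b c : ℝ) (d : EReal)
    (hab : a < (b : EReal)) (hbc : b ≤ c) (hcd : (c : EReal) < d) :
    ((Set.Icc b c ⊆ J ∧ ∀ x ∈ J, a < (x : EReal) ∧ (x : EReal) < d) →
       persMeasure (intervalModule k ℝ J hJ) a b c d = 1) ∧
    (¬(Set.Icc b c ⊆ J ∧ ∀ x ∈ J, a < (x : EReal) ∧ (x : EReal) < d) →
       persMeasure (intervalModule k ℝ J hJ) a b c d = 0) := by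
  set V := intervalModule k ℝ J hJ with hV
  constructor
  · rintro ⟨hIcc, hin⟩
    have hb : b ∈ J := hIcc ⟨le_rfl, hbc⟩
    have hc : c ∈ J := hIcc ⟨hbc, le_rfl⟩
    -- persIm b c = ⊤
    have h1 : persIm V (b : EReal) c = ⊤ := by
      rw [persIm_coe V b c hbc, hV, im_range_top hJ b c hbc hb]
    -- persKer c d = ⊤
    have h2 : persKer V c d = ⊤ := by
      by_cases hd : ∃ d' : ℝ, d = (d' : EReal) ∧ c ≤ d'
      · obtain ⟨d', rfl, hcd'⟩ := hd
        have hd'J : d' ∉ J := fun hmem => by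
          have := (hin d' hmem).2
          exact absurd this (lt_irrefl _)
        rw [persKer_coe V c d' hcd', hV, im_ker_top hJ c d' hcd' hd'J]
      · rw [persKer, dif_neg hd]
    -- persIm a c = ⊥
    have h3 : persIm V a c = ⊥ := by
      by_cases ha : ∃ a' : ℝ, a = (a' : EReal) ∧ a' ≤ c
      · obtain ⟨a', rfl, hac'⟩ := ha
        have ha'J : a' ∉ J := fun hmem => by
          have := (hin a' hmem).1
          exact absurd this (lt_irrefl _)
        rw [persIm_coe V a' c hac', hV, im_range_bot hJ a' c hac' ha'J]
      · rw [persIm, dif_neg ha]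
    rw [persMeasure]
    rw [edim_quot_of_top_bot (by rw [h1, h2, top_inf_eq]) (by rw [h3, bot_inf_eq])]
    -- edim of V.space c = 1
    haveI : Unique (PLift (c ∈ J)) := ⟨⟨⟨hc⟩⟩, fun x => rfl⟩
    have e : V.space c ≃ₗ[k] k := LinearEquiv.funUnique (PLift (c ∈ J)) k k
    rw [edim, e.rank_eq, Module.rank_self]
    simp
  · intro hC
    rw [persMeasure]
    refine edim_quot_of_le ?_
    by_cases hc : c ∈ J
    case neg =>
      haveI : Subsingleton (V.space c) :=
        ⟨fun f g => funext fun x => absurd x.down hc⟩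
      intro x _
      have : x = 0 := Subsingleton.elim x 0
      rw [this]; exact Submodule.zero_mem _
    by_cases hb : b ∈ J
    case neg =>
      have h1 : persIm V (b : EReal) c = ⊥ := by
        rw [persIm_coe V b c hbc, hV, im_range_bot hJ b c hbc hb]
      intro x hx
      have : x ∈ (⊥ : Submodule k (V.space c)) := h1 ▸ hx.1
      rw [Submodule.mem_bot] at this
      rw [this]; exact Submodule.zero_mem _
    -- now b, c ∈ J, so Icc b c ⊆ J; hence the "∀ x ∈ J" part fails
    have hIcc : Set.Icc b c ⊆ J := fun x hx => hJ.2 hb hc hx.1 hx.2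
    have : ∃ x ∈ J, ¬(a < (x : EReal) ∧ (x : EReal) < d) := by
      by_contra h
      push_neg at h
      exact hC ⟨hIcc, h⟩
    obtain ⟨x, hxJ, hx⟩ := this
    rw [not_and_or, not_lt, not_lt] at hx
    rcases hx with hxa | hxd
    · -- x ≤ a : persIm a c = ⊤, so P ⊇ ker ⊇ N
      have ha_ne_top : a ≠ ⊤ := ne_top_of_lt hab
      have ha_ne_bot : a ≠ ⊥ := by
        intro h; rw [h] at hxa; exact absurd (le_bot_iff.mp hxa) (EReal.coe_ne_bot x)
      obtain ⟨a', rfl⟩ : ∃ a' : ℝ, a = (a' : EReal) := by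
        induction a using EReal.rec with
        | bot => exact absurd rfl ha_ne_bot
        | coe a' => exact ⟨a', rfl⟩
        | top => exact absurd rfl ha_ne_top
      have hxa' : x ≤ a' := by exact_mod_cast hxa
      have hab' : a' < b := by exact_mod_cast hab
      have ha'J : a' ∈ J := hJ.2 hxJ hb hxa' hab'.le
      have h3 : persIm V (a' : EReal) c = ⊤ := by
        rw [persIm_coe V a' c (hab'.le.trans hbc), hV,
          im_range_top hJ a' c (hab'.le.trans hbc) ha'J]
      refine le_inf ?_ inf_le_right
      rw [h3]; exact le_top
    · -- d ≤ x : persKer c d = ⊥, so N = ⊥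
      have hd_ne_bot : d ≠ ⊥ := by
        intro h; rw [h] at hcd; exact absurd hcd (by simp)
      have hd_ne_top : d ≠ ⊤ := by
        intro h; rw [h] at hxd; exact absurd (top_le_iff.mp hxd) (EReal.coe_ne_top x)
      obtain ⟨d', rfl⟩ : ∃ d' : ℝ, d = (d' : EReal) := by
        induction d using EReal.rec with
        | bot => exact absurd rfl hd_ne_bot
        | coe d' => exact ⟨d', rfl⟩
        | top => exact absurd rfl hd_ne_top
      have hcd' : c < d' := by exact_mod_cast hcd
      have hxd' : d' ≤ x := by exact_mod_cast hxd
      have hd'J : d' ∈ J := hJ.2 hc hxJ hcd'.le hxd'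
      have h2 : persKer V c (d' : EReal) = ⊥ := by
        rw [persKer_coe V c d' hcd'.le, hV, im_ker_bot hJ c d' hcd'.le hc hd'J]
      intro y hy
      have : y ∈ (⊥ : Submodule k (V.space c)) := h2 ▸ hy.2
      rw [Submodule.mem_bot] at this
      rw [this]; exact Submodule.zero_mem _
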